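/- Consider the parametric optimization min_{u} ½[1; x; u]ᵀ Γ [1; x; u] subject to Wx + Su + p ≤ 0, with Γ^{uu} positive definite. For each index set a of constraints, let ρ^a(x) denote the solution of the equality-constrained problem with constraints indexed by a active (affine in x where defined), and let X_a = { x : ρ^a(x) exists, is feasible, and satisfies the optimality conditions with multipliers ≥ 0 }. Then each X_a is a polyhedron, the sets X_a over all index sets a cover the feasible parameter set X = { x : ∃u, Wx + Su + p ≤ 0 }, and the optimal solution map x ↦ u⋆(x) is piecewise affine: on each X_a it equals the affine map ρ^a. -/

import Mathlib

open Matrix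

/-- The candidate affine policy associated with an active index set `a`. -/
noncomputable def rhoA {nq nu m : ℕ} (K : Finset (Fin m) → Matrix (Fin nu) (Fin nq) ℝ)
    (s : Finset (Fin m) → (Fin nu → ℝ)) (a : Finset (Fin m))
    (x : Fin nq → ℝ) : Fin nu → ℝ :=
  (K a).mulVec x + s a

/-- The quadratic cost (in `u`, parameterized by `x`) of the parametric QP. -/
noncomputable def qpCost {nq nu : ℕ} (F : Matrix (Fin nu) (Fin nu) ℝ)
    (P : Matrix (Fin nu) (Fin nq) ℝ) (H : Fin nu → ℝ)
    (x : Fin nq → ℝ) (u : Fin nu → ℝ) : ℝ :=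
  (1 / 2) * (u ⬝ᵥ F.mulVec u) + (P.mulVec x + H) ⬝ᵥ u

/-- The region `X_a` of parameters on which the affine policy for active set `a`
is feasible and satisfies the optimality (cone of active-row) condition. -/
def Xa {nq nu m : ℕ} (F : Matrix (Fin nu) (Fin nu) ℝ)
    (P : Matrix (Fin nu) (Fin nq) ℝ) (H : Fin nu → ℝ)
    (W : Matrix (Fin m) (Fin nq) ℝ) (S : Matrix (Fin m) (Fin nu) ℝ) (p : Fin m → ℝ)
    (K : Finset (Fin m) → Matrix (Fin nu) (Fin nq) ℝ)
    (s : Finset (Fin m) → (Fin nu → ℝ)) (a : Finset (Fin m)) : Set (Fin nq → ℝ) :=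
  {x | (∀ j, W.mulVec x j + S.mulVec (rhoA K s a x) j + p j ≤ 0) ∧
    ∃ lam : Fin m → ℝ, (∀ j, 0 ≤ lam j) ∧ (∀ j ∉ a, lam j = 0) ∧
      -(F.mulVec (rhoA K s a x) + P.mulVec x + H) = Sᵀ.mulVec lam}



def IsPolyh {n : ℕ} (Pset : Set (Fin n → ℝ)) : Prop :=
  ∃ (k : ℕ) (L : Matrix (Fin k) (Fin n) ℝ) (l : Fin k → ℝ),
    Pset = {x | ∀ i, L.mulVec x i + l i ≤ 0}

lemma isPoly_of_finite {n : ℕ} (ι : Type) [Fintype ι] (c : ι → Fin n → ℝ) (d : ι → ℝ) :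
    IsPolyh {x | ∀ i, c i ⬝ᵥ x + d i ≤ 0} := by
  refine ⟨Fintype.card ι, Matrix.of (fun i j => c ((Fintype.equivFin ι).symm i) j),
    fun i => d ((Fintype.equivFin ι).symm i), ?_⟩
  ext x
  constructor
  · intro h i
    exact h ((Fintype.equivFin ι).symm i)
  · intro h i
    have := h (Fintype.equivFin ι i)
    simpa [Matrix.mulVec, dotProduct] using this

lemma fm_one {k : ℕ} (c f : Fin k → ℝ) :
    (∃ t : ℝ, ∀ i, c i * t + f i ≤ 0) ↔
      ((∀ i, c i = 0 → f i ≤ 0) ∧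
        ∀ i j, 0 < c i → c j < 0 → (-(c j)) * f i + c i * f j ≤ 0) := by
  classical
  constructor
  · rintro ⟨t, ht⟩
    constructor
    · intro i hi
      have := ht i; rw [hi] at this; linarith
    · intro i j hi hj
      have h1 := ht i; have h2 := ht j
      nlinarith
  · rintro ⟨h0, hp⟩
    set Lset := Finset.univ.filter (fun i => c i < 0) with hLdef
    by_cases hL : Lset.Nonempty
    · refine ⟨Lset.sup' hL (fun j => -f j / c j), ?_⟩
      intro i
      rcases lt_trichotomy (c i) 0 with hci | hci | hci
      · have hmem : i ∈ Lset := by simp [hLdef, hci]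
        have hle : -f i / c i ≤ Lset.sup' hL (fun j => -f j / c j) :=
          Finset.le_sup' (fun j => -f j / c j) hmem
        have hne : c i ≠ 0 := ne_of_lt hci
        have h1 : c i * (-f i / c i) = -f i := by
          rw [mul_comm, div_mul_cancel₀ _ hne]
        nlinarith
      · have := h0 i hci; rw [hci]; linarith
      · have hub : Lset.sup' hL (fun j => -f j / c j) ≤ -f i / c i := by
          apply Finset.sup'_le
          intro j hj
          have hcj : c j < 0 := by simpa [hLdef] using hj
          have hpij := hp i j hci hcj
          have e1 : -f j / c j = f j / (-c j) := by rw [div_neg, neg_div]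
          have e2 : -f i / c i = (-f i) / c i := by rw [neg_div]
          rw [e1, e2, div_le_div_iff₀ (by linarith) hci]
          nlinarith
        have hne : c i ≠ 0 := ne_of_gt hci
        have h1 : c i * (-f i / c i) = -f i := by
          rw [mul_comm, div_mul_cancel₀ _ hne]
        nlinarith
    · set Uset := Finset.univ.filter (fun i => 0 < c i) with hUdef
      by_cases hU : Uset.Nonempty
      · refine ⟨Uset.inf' hU (fun j => -f j / c j), ?_⟩
        intro i
        rcases lt_trichotomy (c i) 0 with hci | hci | hci
        · exact absurd (Finset.filter_nonempty_iff.mpr ⟨i, Finset.mem_univ i, hci⟩) hL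
        · have := h0 i hci; rw [hci]; linarith
        · have hmem : i ∈ Uset := by simp [hUdef, hci]
          have hle : Uset.inf' hU (fun j => -f j / c j) ≤ -f i / c i :=
            Finset.inf'_le _ hmem
          have hne : c i ≠ 0 := ne_of_gt hci
          have h1 : c i * (-f i / c i) = -f i := by
            rw [mul_comm, div_mul_cancel₀ _ hne]
          nlinarith
      · refine ⟨0, ?_⟩
        intro i
        rcases lt_trichotomy (c i) 0 with hci | hci | hci
        · exact absurd (Finset.filter_nonempty_iff.mpr ⟨i, Finset.mem_univ i, hci⟩) hL
        · have := h0 i hci; rw [hci]; linarith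
        · exact absurd (Finset.filter_nonempty_iff.mpr ⟨i, Finset.mem_univ i, hci⟩) hU

lemma dot_comb {n : ℕ} (a b : ℝ) (A B y : Fin n → ℝ) :
    (fun r => a * A r + b * B r) ⬝ᵥ y = a * (A ⬝ᵥ y) + b * (B ⬝ᵥ y) := by
  simp only [dotProduct, Finset.mul_sum, ← Finset.sum_add_distrib]
  apply Finset.sum_congr rfl
  intros
  ring

lemma isPolyh_exists_snoc {n : ℕ} {Pset : Set (Fin (n + 1) → ℝ)} (h : IsPolyh Pset) :
    IsPolyh {y : Fin n → ℝ | ∃ t : ℝ, Fin.snoc y t ∈ Pset} := by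
  classical
  obtain ⟨k, L, l, rfl⟩ := h
  set c : Fin k → ℝ := fun i => L i (Fin.last n) with hc
  set A : Fin k → Fin n → ℝ := fun i j => L i j.castSucc with hA
  have key : ∀ (y : Fin n → ℝ) (t : ℝ) (i : Fin k),
      L.mulVec (Fin.snoc y t) i + l i = c i * t + (A i ⬝ᵥ y + l i) := by
    intro y t i
    simp only [Matrix.mulVec, dotProduct, Fin.sum_univ_castSucc, Fin.snoc_castSucc,
      Fin.snoc_last, hc, hA]
    ring
  have main : ∀ y : Fin n → ℝ, (∃ t : ℝ, Fin.snoc y t ∈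
        {x : Fin (n+1) → ℝ | ∀ i, L.mulVec x i + l i ≤ 0}) ↔
      ((∀ i, c i = 0 → A i ⬝ᵥ y + l i ≤ 0) ∧
        ∀ i j, 0 < c i → c j < 0 →
          (-(c j)) * (A i ⬝ᵥ y + l i) + c i * (A j ⬝ᵥ y + l j) ≤ 0) := by
    intro y
    rw [show (∃ t : ℝ, Fin.snoc y t ∈
        {x : Fin (n+1) → ℝ | ∀ i, L.mulVec x i + l i ≤ 0}) ↔
        (∃ t : ℝ, ∀ i, c i * t + (A i ⬝ᵥ y + l i) ≤ 0) from
      exists_congr fun t => by simp only [Set.mem_setOf_eq, key y t]]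
    exact fm_one c (fun i => A i ⬝ᵥ y + l i)
  -- encode as a finite system
  let ι := Fin k ⊕ (Fin k × Fin k)
  let cc : ι → Fin n → ℝ := fun i => match i with
    | Sum.inl i => if c i = 0 then A i else 0
    | Sum.inr (i, j) => if 0 < c i ∧ c j < 0 then
        (fun r => (-(c j)) * A i r + c i * A j r) else 0
  let dd : ι → ℝ := fun i => match i with
    | Sum.inl i => if c i = 0 then l i else 0
    | Sum.inr (i, j) => if 0 < c i ∧ c j < 0 then (-(c j)) * l i + c i * l j else 0
  have : {y : Fin n → ℝ | ∃ t : ℝ, Fin.snoc y t ∈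
        {x : Fin (n+1) → ℝ | ∀ i, L.mulVec x i + l i ≤ 0}}
      = {y | ∀ i : ι, cc i ⬝ᵥ y + dd i ≤ 0} := by
    ext y
    rw [Set.mem_setOf_eq, Set.mem_setOf_eq, main y]
    constructor
    · rintro ⟨h1, h2⟩ i
      match i with
      | Sum.inl i =>
          show (if c i = 0 then A i else 0) ⬝ᵥ y + (if c i = 0 then l i else 0) ≤ 0
          by_cases hci : c i = 0
          · rw [if_pos hci, if_pos hci]; exact h1 i hci
          · rw [if_neg hci, if_neg hci]; simp
      | Sum.inr (i, j) =>
          show (if 0 < c i ∧ c j < 0 then (fun r => (-(c j)) * A i r + c i * A j r)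
              else 0) ⬝ᵥ y +
            (if 0 < c i ∧ c j < 0 then (-(c j)) * l i + c i * l j else 0) ≤ 0
          by_cases hij : 0 < c i ∧ c j < 0
          · rw [if_pos hij, if_pos hij, dot_comb]
            have := h2 i j hij.1 hij.2
            linarith
          · rw [if_neg hij, if_neg hij]; simp
    · intro h
      constructor
      · intro i hci
        have h' : (if c i = 0 then A i else 0) ⬝ᵥ y + (if c i = 0 then l i else 0) ≤ 0 :=
          h (Sum.inl i)
        rwa [if_pos hci, if_pos hci] at h'
      · intro i j hi hj
        have h' : (if 0 < c i ∧ c j < 0 then (fun r => (-(c j)) * A i r + c i * A j r)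
              else 0) ⬝ᵥ y +
            (if 0 < c i ∧ c j < 0 then (-(c j)) * l i + c i * l j else 0) ≤ 0 :=
          h (Sum.inr (i, j))
        rw [if_pos ⟨hi, hj⟩, if_pos ⟨hi, hj⟩, dot_comb] at h'
        linarith
  rw [this]
  exact isPoly_of_finite ι cc dd

lemma isPolyh_exists_append {n : ℕ} :
    ∀ (m : ℕ) (Pset : Set (Fin (n + m) → ℝ)), IsPolyh Pset →
      IsPolyh {y : Fin n → ℝ | ∃ z : Fin m → ℝ, Fin.append y z ∈ Pset} := by
  intro m
  induction m with
  | zero =>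
      intro Pset h
      have : {y : Fin n → ℝ | ∃ z : Fin 0 → ℝ, Fin.append y z ∈ Pset} = Pset := by
        ext y
        constructor
        · rintro ⟨z, hz⟩
          rwa [Fin.append_right_nil y z rfl, show Fin.cast (by rw [Nat.add_zero]) = id from
            funext fun i => rfl, Function.comp_id] at hz
        · intro hy
          exact ⟨Fin.elim0, by
            rwa [Fin.append_right_nil y Fin.elim0 rfl, show Fin.cast (by rw [Nat.add_zero]) = id from
              funext fun i => rfl, Function.comp_id]⟩
      rwa [this]
  | succ m ih =>
      intro Pset h
      have hQ : IsPolyh {w : Fin (n + m) → ℝ | ∃ t : ℝ, Fin.snoc w t ∈ Pset} :=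
        isPolyh_exists_snoc h
      have := ih _ hQ
      have heq : {y : Fin n → ℝ | ∃ z : Fin m → ℝ,
            Fin.append y z ∈ {w : Fin (n + m) → ℝ | ∃ t : ℝ, Fin.snoc w t ∈ Pset}}
          = {y : Fin n → ℝ | ∃ z : Fin (m + 1) → ℝ, Fin.append y z ∈ Pset} := by
        ext y
        constructor
        · rintro ⟨z, t, hzt⟩
          exact ⟨Fin.snoc z t, by rwa [Fin.append_snoc]⟩
        · rintro ⟨z, hz⟩
          refine ⟨Fin.init z, z (Fin.last m), ?_⟩
          show Fin.snoc (Fin.append y (Fin.init z)) (z (Fin.last m)) ∈ Pset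
          rwa [← Fin.append_snoc, Fin.snoc_init_self]
      rwa [heq] at this

lemma dot_append {n m : ℕ} (a : Fin n → ℝ) (b : Fin m → ℝ) (u : Fin n → ℝ) (v : Fin m → ℝ) :
    Fin.append a b ⬝ᵥ Fin.append u v = a ⬝ᵥ u + b ⬝ᵥ v := by
  simp [dotProduct, Fin.sum_univ_add]

lemma qp_expand {nq nu : ℕ} {F : Matrix (Fin nu) (Fin nu) ℝ}
    {P : Matrix (Fin nu) (Fin nq) ℝ} {H : Fin nu → ℝ}
    (hFt : Fᵀ = F) (x : Fin nq → ℝ) (v d : Fin nu → ℝ) :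
    qpCost F P H x (v + d) = qpCost F P H x v
      + (F.mulVec v + P.mulVec x + H) ⬝ᵥ d + (1 / 2) * (d ⬝ᵥ F.mulVec d) := by
  have hsym : d ⬝ᵥ F.mulVec v = v ⬝ᵥ F.mulVec d := by
    rw [dotProduct_mulVec, ← Matrix.mulVec_transpose, hFt, dotProduct_comm]
  simp only [qpCost, Matrix.mulVec_add, dotProduct_add, add_dotProduct]
  rw [dotProduct_comm (F.mulVec v) d, hsym]
  ring

lemma qp_min_unique {nq nu : ℕ} {F : Matrix (Fin nu) (Fin nu) ℝ}
    {P : Matrix (Fin nu) (Fin nq) ℝ} {H : Fin nu → ℝ} (hF : F.PosDef)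
    {x : Fin nq → ℝ} {Cset : Set (Fin nu → ℝ)} {u v : Fin nu → ℝ}
    (hu : u ∈ Cset) (hv : v ∈ Cset)
    (hmid : v + (1 / 2 : ℝ) • (u - v) ∈ Cset)
    (hmu : IsMinOn (qpCost F P H x) Cset u) (hmv : IsMinOn (qpCost F P H x) Cset v) :
    u = v := by
  have hFt : Fᵀ = F := by
    have := hF.1
    simpa [Matrix.IsHermitian, Matrix.conjTranspose_eq_transpose_of_trivial] using this
  set d := u - v with hd
  have hqeq : qpCost F P H x u = qpCost F P H x v :=
    le_antisymm (hmu hv) (hmv hu)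
  have e1 : qpCost F P H x u = qpCost F P H x v
      + (F.mulVec v + P.mulVec x + H) ⬝ᵥ d + (1 / 2) * (d ⬝ᵥ F.mulVec d) := by
    rw [← qp_expand hFt x v d, hd]; congr 1; abel
  have e2 : qpCost F P H x (v + (1 / 2 : ℝ) • d) = qpCost F P H x v
      + (1 / 2) * ((F.mulVec v + P.mulVec x + H) ⬝ᵥ d)
      + (1 / 8) * (d ⬝ᵥ F.mulVec d) := by
    rw [qp_expand hFt x v ((1 / 2 : ℝ) • d)]
    rw [dotProduct_smul, smul_dotProduct, Matrix.mulVec_smul, dotProduct_smul]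
    simp only [smul_eq_mul]
    ring
  have hle : qpCost F P H x v ≤ qpCost F P H x (v + (1 / 2 : ℝ) • d) := hmv hmid
  have hquad : d ⬝ᵥ F.mulVec d ≤ 0 := by
    rw [e2] at hle
    rw [e1] at hqeq
    linarith
  by_contra hne
  have hdne : d ≠ 0 := fun h => hne (by rwa [hd, sub_eq_zero] at h)
  have := hF.dotProduct_mulVec_pos hdne
  simp only [star_trivial] at this
  linarith

lemma exists_step {m : ℕ} (v w : Fin m → ℝ) (hv : ∀ j, v j ≤ 0)
    (h0 : ∀ j, v j = 0 → w j ≤ 0) :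
    ∃ ε : ℝ, 0 < ε ∧ ε ≤ 1 ∧ ∀ ε', 0 < ε' → ε' ≤ ε → ∀ j, v j + ε' * w j ≤ 0 := by
  classical
  set T := Finset.univ.filter (fun j => 0 < w j) with hT
  have key : ∀ ε', 0 < ε' → (∀ j ∈ T, ε' ≤ -v j / w j) → ∀ j, v j + ε' * w j ≤ 0 := by
    intro ε' hpos hbd j
    by_cases hw : 0 < w j
    · have hj : j ∈ T := by simp [hT, hw]
      have := hbd j hj
      rw [le_div_iff₀ hw] at this
      linarith
    · have : ε' * w j ≤ 0 :=
        mul_nonpos_of_nonneg_of_nonpos hpos.le (le_of_not_gt hw)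
      have := hv j
      linarith
  by_cases hTne : T.Nonempty
  · have hpos : ∀ j ∈ T, 0 < -v j / w j := by
      intro j hj
      have hw : 0 < w j := by simpa [hT] using hj
      have hvj : v j < 0 := by
        rcases lt_or_eq_of_le (hv j) with h | h
        · exact h
        · exact absurd (h0 j h) (not_le.mpr hw)
      exact div_pos (by linarith) hw
    refine ⟨min 1 (T.inf' hTne (fun j => -v j / w j)), ?_, min_le_left _ _, ?_⟩
    · apply lt_min one_pos
      rw [Finset.lt_inf'_iff]
      intro j hj
      exact hpos j hj
    · intro ε' hε' hle
      apply key ε' hε'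
      intro j hj
      calc ε' ≤ min 1 (T.inf' hTne (fun j => -v j / w j)) := hle
        _ ≤ T.inf' hTne (fun j => -v j / w j) := min_le_right _ _
        _ ≤ -v j / w j := Finset.inf'_le _ hj
  · refine ⟨1, one_pos, le_refl 1, ?_⟩
    intro ε' hε' _
    apply key ε' hε'
    intro j hj
    exact absurd ⟨j, hj⟩ hTne

section XaPoly

variable {nq nu m : ℕ} (F : Matrix (Fin nu) (Fin nu) ℝ) (P : Matrix (Fin nu) (Fin nq) ℝ)
  (H : Fin nu → ℝ) (W : Matrix (Fin m) (Fin nq) ℝ) (S : Matrix (Fin m) (Fin nu) ℝ)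
  (p : Fin m → ℝ) (K : Finset (Fin m) → Matrix (Fin nu) (Fin nq) ℝ)
  (s : Finset (Fin m) → (Fin nu → ℝ)) (a : Finset (Fin m))

lemma Xa_polyhedron : IsPolyh (Xa F P H W S p K s a) := by
  classical
  let ι := (Fin m ⊕ Fin m ⊕ Fin m) ⊕ (Fin nu ⊕ Fin nu)
  let cx : ι → Fin nq → ℝ := fun i => match i with
    | Sum.inl (Sum.inl j) => (W + S * K a) j
    | Sum.inl (Sum.inr (Sum.inl _)) => 0
    | Sum.inl (Sum.inr (Sum.inr _)) => 0
    | Sum.inr (Sum.inl i) => (F * K a + P) i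
    | Sum.inr (Sum.inr i) => -((F * K a + P) i)
  let cl : ι → Fin m → ℝ := fun i => match i with
    | Sum.inl (Sum.inl _) => 0
    | Sum.inl (Sum.inr (Sum.inl j)) => -Pi.single j 1
    | Sum.inl (Sum.inr (Sum.inr j)) => if j ∈ a then 0 else Pi.single j 1
    | Sum.inr (Sum.inl i) => fun j => S j i
    | Sum.inr (Sum.inr i) => fun j => -(S j i)
  let dd : ι → ℝ := fun i => match i with
    | Sum.inl (Sum.inl j) => S.mulVec (s a) j + p j
    | Sum.inl (Sum.inr _) => 0
    | Sum.inr (Sum.inl i) => F.mulVec (s a) i + H i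
    | Sum.inr (Sum.inr i) => -(F.mulVec (s a) i + H i)
  let cc : ι → Fin (nq + m) → ℝ := fun i => Fin.append (cx i) (cl i)
  have hP0 : IsPolyh {z : Fin (nq + m) → ℝ | ∀ i : ι, cc i ⬝ᵥ z + dd i ≤ 0} :=
    isPoly_of_finite ι cc dd
  have hproj := isPolyh_exists_append m _ hP0
  have heq : Xa F P H W S p K s a = {x : Fin nq → ℝ | ∃ z : Fin m → ℝ,
      Fin.append x z ∈ {z : Fin (nq + m) → ℝ | ∀ i : ι, cc i ⬝ᵥ z + dd i ≤ 0}} := by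
    ext x
    have hval1 : ∀ lam : Fin m → ℝ, ∀ j : Fin m,
        cc (Sum.inl (Sum.inl j)) ⬝ᵥ Fin.append x lam + dd (Sum.inl (Sum.inl j))
          = W.mulVec x j + S.mulVec (rhoA K s a x) j + p j := by
      intro lam j
      show Fin.append ((W + S * K a) j) 0 ⬝ᵥ Fin.append x lam + (S.mulVec (s a) j + p j) = _
      rw [dot_append]
      have : (W + S * K a) j ⬝ᵥ x = (W + S * K a).mulVec x j := rfl
      rw [this]
      simp only [Matrix.add_mulVec, zero_dotProduct, rhoA, Matrix.mulVec_add,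
        ← Matrix.mulVec_mulVec, Pi.add_apply]
      ring
    have hval2 : ∀ lam : Fin m → ℝ, ∀ j : Fin m,
        cc (Sum.inl (Sum.inr (Sum.inl j))) ⬝ᵥ Fin.append x lam
          + dd (Sum.inl (Sum.inr (Sum.inl j))) = -lam j := by
      intro lam j
      show Fin.append 0 (-Pi.single j 1) ⬝ᵥ Fin.append x lam + 0 = _
      rw [dot_append]
      simp [single_dotProduct]
    have hval3 : ∀ lam : Fin m → ℝ, ∀ j : Fin m,
        cc (Sum.inl (Sum.inr (Sum.inr j))) ⬝ᵥ Fin.append x lam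
          + dd (Sum.inl (Sum.inr (Sum.inr j))) = if j ∈ a then 0 else lam j := by
      intro lam j
      show Fin.append 0 (if j ∈ a then 0 else Pi.single j 1) ⬝ᵥ Fin.append x lam + 0 = _
      rw [dot_append]
      by_cases hj : j ∈ a <;> simp [hj, single_dotProduct]
    have hval4 : ∀ lam : Fin m → ℝ, ∀ i : Fin nu,
        cc (Sum.inr (Sum.inl i)) ⬝ᵥ Fin.append x lam + dd (Sum.inr (Sum.inl i))
          = F.mulVec (rhoA K s a x) i + P.mulVec x i + H i + Sᵀ.mulVec lam i := by
      intro lam i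
      show Fin.append ((F * K a + P) i) (fun j => S j i) ⬝ᵥ Fin.append x lam
        + (F.mulVec (s a) i + H i) = _
      rw [dot_append]
      have h1 : (F * K a + P) i ⬝ᵥ x = (F * K a + P).mulVec x i := rfl
      have h2 : (fun j => S j i) ⬝ᵥ lam = Sᵀ.mulVec lam i := by
        simp [Matrix.mulVec, dotProduct, Matrix.transpose_apply]
      rw [h1, h2]
      simp only [Matrix.add_mulVec, rhoA, Matrix.mulVec_add, ← Matrix.mulVec_mulVec]
      rw [Pi.add_apply, Pi.add_apply]
      ring
    have hval5 : ∀ lam : Fin m → ℝ, ∀ i : Fin nu,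
        cc (Sum.inr (Sum.inr i)) ⬝ᵥ Fin.append x lam + dd (Sum.inr (Sum.inr i))
          = -(F.mulVec (rhoA K s a x) i + P.mulVec x i + H i + Sᵀ.mulVec lam i) := by
      intro lam i
      have hneg : cc (Sum.inr (Sum.inr i)) = -(cc (Sum.inr (Sum.inl i))) := by
        show Fin.append (-((F * K a + P) i)) (fun j => -(S j i))
          = -(Fin.append ((F * K a + P) i) (fun j => S j i))
        funext r
        simp only [Pi.neg_apply]
        refine Fin.addCases (fun r => ?_) (fun r => ?_) r
        · rw [Fin.append_left, Fin.append_left]; rfl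
        · rw [Fin.append_right, Fin.append_right]
      rw [hneg, neg_dotProduct]
      have := hval4 lam i
      show -(cc (Sum.inr (Sum.inl i)) ⬝ᵥ Fin.append x lam)
        + -(dd (Sum.inr (Sum.inl i))) = _
      linarith
    constructor
    · rintro ⟨h1, lam, h2, h3, h4⟩
      refine ⟨lam, ?_⟩
      rintro ((j | j | j) | (i | i))
      · rw [hval1 lam j]; exact h1 j
      · rw [hval2 lam j]; linarith [h2 j]
      · rw [hval3 lam j]
        by_cases hj : j ∈ a
        · simp [hj]
        · simp [hj, h3 j hj]
      · rw [hval4 lam i]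
        have := congrFun h4 i
        simp only [Pi.neg_apply, Pi.add_apply] at this
        linarith
      · rw [hval5 lam i]
        have := congrFun h4 i
        simp only [Pi.neg_apply, Pi.add_apply] at this
        linarith
    · rintro ⟨lam, hall⟩
      have h2 : ∀ j, 0 ≤ lam j := by
        intro j
        have := hall (Sum.inl (Sum.inr (Sum.inl j)))
        rw [hval2 lam j] at this
        linarith
      refine ⟨?_, lam, h2, ?_, ?_⟩
      · intro j
        have := hall (Sum.inl (Sum.inl j))
        rwa [hval1 lam j] at this
      · intro j hj
        have := hall (Sum.inl (Sum.inr (Sum.inr j)))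
        rw [hval3 lam j, if_neg hj] at this
        linarith [h2 j]
      · funext i
        have ha := hall (Sum.inr (Sum.inl i))
        have hb := hall (Sum.inr (Sum.inr i))
        rw [hval4 lam i] at ha
        rw [hval5 lam i] at hb
        simp only [Pi.neg_apply, Pi.add_apply]
        linarith
  rw [heq]
  exact hproj

end XaPoly

section ConePoly

variable {nu m : ℕ} (S : Matrix (Fin m) (Fin nu) ℝ) (A : Finset (Fin m))

def coneSet : Set (Fin nu → ℝ) :=
  {v | ∃ lam : Fin m → ℝ, (∀ j, 0 ≤ lam j) ∧ (∀ j ∉ A, lam j = 0) ∧ v = Sᵀ.mulVec lam}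

lemma coneSet_polyhedron : IsPolyh (coneSet S A) := by
  classical
  let ι := Fin m ⊕ Fin m ⊕ (Fin nu ⊕ Fin nu)
  let cx : ι → Fin nu → ℝ := fun i => match i with
    | Sum.inl _ => 0
    | Sum.inr (Sum.inl _) => 0
    | Sum.inr (Sum.inr (Sum.inl i)) => Pi.single i 1
    | Sum.inr (Sum.inr (Sum.inr i)) => -Pi.single i 1
  let cl : ι → Fin m → ℝ := fun i => match i with
    | Sum.inl j => -Pi.single j 1
    | Sum.inr (Sum.inl j) => if j ∈ A then 0 else Pi.single j 1
    | Sum.inr (Sum.inr (Sum.inl i)) => fun j => -(S j i)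
    | Sum.inr (Sum.inr (Sum.inr i)) => fun j => S j i
  let cc : ι → Fin (nu + m) → ℝ := fun i => Fin.append (cx i) (cl i)
  have hP0 : IsPolyh {z : Fin (nu + m) → ℝ | ∀ i : ι, cc i ⬝ᵥ z + 0 ≤ 0} :=
    isPoly_of_finite ι cc 0
  have hproj := isPolyh_exists_append m _ hP0
  have heq : coneSet S A = {v : Fin nu → ℝ | ∃ z : Fin m → ℝ,
      Fin.append v z ∈ {z : Fin (nu + m) → ℝ | ∀ i : ι, cc i ⬝ᵥ z + 0 ≤ 0}} := by
    ext v
    have hval1 : ∀ lam : Fin m → ℝ, ∀ j : Fin m,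
        cc (Sum.inl j) ⬝ᵥ Fin.append v lam = -lam j := by
      intro lam j
      show Fin.append 0 (-Pi.single j 1) ⬝ᵥ Fin.append v lam = _
      rw [dot_append]
      simp [single_dotProduct]
    have hval2 : ∀ lam : Fin m → ℝ, ∀ j : Fin m,
        cc (Sum.inr (Sum.inl j)) ⬝ᵥ Fin.append v lam = if j ∈ A then 0 else lam j := by
      intro lam j
      show Fin.append 0 (if j ∈ A then 0 else Pi.single j 1) ⬝ᵥ Fin.append v lam = _
      rw [dot_append]
      by_cases hj : j ∈ A <;> simp [hj, single_dotProduct]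
    have hval3 : ∀ lam : Fin m → ℝ, ∀ i : Fin nu,
        cc (Sum.inr (Sum.inr (Sum.inl i))) ⬝ᵥ Fin.append v lam
          = v i - Sᵀ.mulVec lam i := by
      intro lam i
      show Fin.append (Pi.single i 1) (fun j => -(S j i)) ⬝ᵥ Fin.append v lam = _
      rw [dot_append]
      have h2 : (fun j => -(S j i)) ⬝ᵥ lam = -(Sᵀ.mulVec lam i) := by
        simp [Matrix.mulVec, dotProduct, Matrix.transpose_apply, Finset.sum_neg_distrib]
      rw [h2, single_dotProduct]
      ring
    have hval4 : ∀ lam : Fin m → ℝ, ∀ i : Fin nu,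
        cc (Sum.inr (Sum.inr (Sum.inr i))) ⬝ᵥ Fin.append v lam
          = -(v i - Sᵀ.mulVec lam i) := by
      intro lam i
      show Fin.append (-Pi.single i 1) (fun j => S j i) ⬝ᵥ Fin.append v lam = _
      rw [dot_append]
      have h2 : (fun j => S j i) ⬝ᵥ lam = Sᵀ.mulVec lam i := by
        simp [Matrix.mulVec, dotProduct, Matrix.transpose_apply]
      rw [h2, neg_dotProduct, single_dotProduct]
      ring
    constructor
    · rintro ⟨lam, h1, h2, h3⟩
      refine ⟨lam, ?_⟩
      rintro (j | j | i | i) <;> rw [add_zero]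
      · rw [hval1 lam j]; linarith [h1 j]
      · rw [hval2 lam j]
        by_cases hj : j ∈ A
        · simp [hj]
        · simp [hj, h2 j hj]
      · rw [hval3 lam i]
        have := congrFun h3 i
        linarith [this.le, this.ge]
      · rw [hval4 lam i]
        have := congrFun h3 i
        linarith [this.le, this.ge]
    · rintro ⟨lam, hall⟩
      have h1 : ∀ j, 0 ≤ lam j := by
        intro j
        have := hall (Sum.inl j)
        rw [add_zero, hval1 lam j] at this
        linarith
      refine ⟨lam, h1, ?_, ?_⟩
      · intro j hj
        have := hall (Sum.inr (Sum.inl j))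
        rw [add_zero, hval2 lam j, if_neg hj] at this
        linarith [h1 j]
      · funext i
        have ha := hall (Sum.inr (Sum.inr (Sum.inl i)))
        have hb := hall (Sum.inr (Sum.inr (Sum.inr i)))
        rw [add_zero, hval3 lam i] at ha
        rw [add_zero, hval4 lam i] at hb
        linarith
  rw [heq]
  exact hproj

lemma coneSet_halfspaces : ∃ (k : ℕ) (L : Matrix (Fin k) (Fin nu) ℝ),
    coneSet S A = {v | ∀ i, L.mulVec v i ≤ 0} := by
  obtain ⟨k, L, l, hL⟩ := coneSet_polyhedron S A
  have h0 : (0 : Fin nu → ℝ) ∈ coneSet S A := by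
    refine ⟨0, fun j => le_refl 0, fun j _ => rfl, ?_⟩
    rw [Matrix.mulVec_zero]
  have hl : ∀ i, l i ≤ 0 := by
    intro i
    have := h0
    rw [hL] at this
    have := this i
    rwa [Matrix.mulVec_zero, Pi.zero_apply, zero_add] at this
  have hscale : ∀ v ∈ coneSet S A, ∀ t : ℝ, 0 ≤ t → t • v ∈ coneSet S A := by
    rintro v ⟨lam, h1, h2, h3⟩ t ht
    refine ⟨t • lam, fun j => mul_nonneg ht (h1 j), fun j hj => ?_, ?_⟩
    · simp [Pi.smul_apply, h2 j hj]
    · rw [h3, Matrix.mulVec_smul]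
  refine ⟨k, L, ?_⟩
  ext v
  constructor
  · intro hv i
    by_contra hpos
    push_neg at hpos
    set t : ℝ := (1 - l i) / (L.mulVec v) i with hts
    have ht : 0 ≤ t := by
      apply div_nonneg _ hpos.le
      linarith [hl i]
    have hmem := hscale v hv t ht
    rw [hL] at hmem
    have := hmem i
    rw [Matrix.mulVec_smul, Pi.smul_apply, smul_eq_mul, hts,
      div_mul_cancel₀ _ (ne_of_gt hpos)] at this
    linarith
  · intro hv
    rw [hL]
    intro i
    have := hv i
    linarith [hl i]

end ConePoly

theorem parametric_qp_piecewise_affine (nq nu m : ℕ)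
    (F : Matrix (Fin nu) (Fin nu) ℝ) (P : Matrix (Fin nu) (Fin nq) ℝ)
    (H : Fin nu → ℝ)
    (W : Matrix (Fin m) (Fin nq) ℝ) (S : Matrix (Fin m) (Fin nu) ℝ) (p : Fin m → ℝ)
    (hF : F.PosDef)
    (K : Finset (Fin m) → Matrix (Fin nu) (Fin nq) ℝ)
    (s : Finset (Fin m) → (Fin nu → ℝ))
    -- ρ^a satisfies the active constraints as equalities
    (hact : ∀ (a : Finset (Fin m)) (x : Fin nq → ℝ), ∀ j ∈ a,
      W.mulVec x j + S.mulVec (rhoA K s a x) j + p j = 0)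
    -- ρ^a solves the equality-constrained problem with constraints in `a` active
    (hmin : ∀ (a : Finset (Fin m)) (x : Fin nq → ℝ),
      IsMinOn (qpCost F P H x)
        {u | ∀ j ∈ a, W.mulVec x j + S.mulVec u j + p j = 0} (rhoA K s a x))
    -- the optimal solution map u⋆
    (ustar : (Fin nq → ℝ) → (Fin nu → ℝ))
    (hstar : ∀ x : Fin nq → ℝ,
      (∃ u, ∀ j, W.mulVec x j + S.mulVec u j + p j ≤ 0) →
      (∀ j, W.mulVec x j + S.mulVec (ustar x) j + p j ≤ 0) ∧
      IsMinOn (qpCost F P H x)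
        {u | ∀ j, W.mulVec x j + S.mulVec u j + p j ≤ 0} (ustar x)) :
    -- each X_a is a polyhedron
    (∀ a : Finset (Fin m), ∃ (k : ℕ) (L : Matrix (Fin k) (Fin nq) ℝ) (l : Fin k → ℝ),
      Xa F P H W S p K s a = {x | ∀ i, L.mulVec x i + l i ≤ 0}) ∧
    -- the regions X_a cover the feasible parameter set
    (∀ x : Fin nq → ℝ, (∃ u, ∀ j, W.mulVec x j + S.mulVec u j + p j ≤ 0) →
      ∃ a : Finset (Fin m), x ∈ Xa F P H W S p K s a) ∧
    -- on each X_a the optimizer agrees with the affine policy ρ^a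
    (∀ (a : Finset (Fin m)) (x : Fin nq → ℝ), x ∈ Xa F P H W S p K s a →
      ustar x = rhoA K s a x) := by
  classical
  have hFt : Fᵀ = F := by
    have := hF.1
    simpa [Matrix.IsHermitian, Matrix.conjTranspose_eq_transpose_of_trivial] using this
  have hquad_nonneg : ∀ d : Fin nu → ℝ, 0 ≤ d ⬝ᵥ F.mulVec d := by
    intro d
    have := hF.posSemidef.dotProduct_mulVec_nonneg d
    simpa using this
  -- Part 3 first
  have part3 : ∀ (a : Finset (Fin m)) (x : Fin nq → ℝ), x ∈ Xa F P H W S p K s a →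
      ustar x = rhoA K s a x := by
    intro a x hx
    obtain ⟨hfeas, lam, hlam0, hlamsupp, hlameq⟩ := hx
    set ρ := rhoA K s a x with hρ
    have hρmin : IsMinOn (qpCost F P H x)
        {u | ∀ j, W.mulVec x j + S.mulVec u j + p j ≤ 0} ρ := by
      rw [isMinOn_iff]
      intro u hu
      set d := u - ρ with hd
      have hexp : qpCost F P H x u = qpCost F P H x ρ
          + (F.mulVec ρ + P.mulVec x + H) ⬝ᵥ d + (1 / 2) * (d ⬝ᵥ F.mulVec d) := by
        rw [← qp_expand hFt x ρ d]
        congr 1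
        rw [hd]; abel
      have hlin : (F.mulVec ρ + P.mulVec x + H) ⬝ᵥ d = -(lam ⬝ᵥ S.mulVec d) := by
        have h1 : F.mulVec ρ + P.mulVec x + H = -(Sᵀ.mulVec lam) := by
          rw [← hlameq]; simp
        rw [h1, neg_dotProduct, Matrix.mulVec_transpose, ← Matrix.dotProduct_mulVec]
      have hterm : lam ⬝ᵥ S.mulVec d ≤ 0 := by
        apply Finset.sum_nonpos
        intro j _
        by_cases hj : j ∈ a
        · have hSd : S.mulVec d j ≤ 0 := by
            have h1 := hu j
            have h2 := hact a x j hj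
            have h3 : S.mulVec d j = S.mulVec u j - S.mulVec ρ j := by
              rw [hd, Matrix.mulVec_sub, Pi.sub_apply]
            rw [h3]; linarith
          exact mul_nonpos_of_nonneg_of_nonpos (hlam0 j) hSd
        · rw [hlamsupp j hj, zero_mul]
      have := hquad_nonneg d
      rw [hexp, hlin]
      linarith
    obtain ⟨hufeas, humin⟩ := hstar x ⟨ρ, hfeas⟩
    exact qp_min_unique hF
      (Cset := {w | ∀ j, W.mulVec x j + S.mulVec w j + p j ≤ 0}) hufeas hfeas
      (by
        intro j
        have h1 := hufeas j
        have h2 := hfeas j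
        have h3 : S.mulVec (ρ + (1 / 2 : ℝ) • (ustar x - ρ)) j
            = S.mulVec ρ j + (1 / 2) * (S.mulVec (ustar x) j - S.mulVec ρ j) := by
          rw [Matrix.mulVec_add, Matrix.mulVec_smul, Matrix.mulVec_sub]
          simp
        show W.mulVec x j + S.mulVec (ρ + (1 / 2 : ℝ) • (ustar x - ρ)) j + p j ≤ 0
        rw [h3]; linarith)
      humin hρmin
  refine ⟨fun a => Xa_polyhedron F P H W S p K s a, ?_, part3⟩
  -- Part 2: coverage
  intro x hxfeas
  obtain ⟨hufeas, humin⟩ := hstar x hxfeas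
  set u := ustar x with hu
  set A := Finset.univ.filter
    (fun j => W.mulVec x j + S.mulVec u j + p j = 0) with hA
  have hmemA : ∀ j, j ∈ A ↔ W.mulVec x j + S.mulVec u j + p j = 0 := by
    intro j; simp [hA]
  -- Step A : u minimizes the equality-constrained problem for A
  have hEqmin : IsMinOn (qpCost F P H x)
      {w | ∀ j ∈ A, W.mulVec x j + S.mulVec w j + p j = 0} u := by
    rw [isMinOn_iff]
    intro u' hu'
    by_contra hlt
    push_neg at hlt
    set v : Fin m → ℝ := fun j => W.mulVec x j + S.mulVec u j + p j with hv
    set w : Fin m → ℝ := fun j =>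
      (W.mulVec x j + S.mulVec u' j + p j) - v j with hw
    obtain ⟨θ, hθpos, hθ1, hθprop⟩ := exists_step v w hufeas (by
      intro j hj
      have hjA : j ∈ A := (hmemA j).mpr hj
      have h5 := hu' j hjA
      show (W.mulVec x j + S.mulVec u' j + p j) - v j ≤ 0
      rw [h5, hj]
      norm_num)
    set d := u' - u with hd
    have hfeasθ : ∀ j, W.mulVec x j + S.mulVec (u + θ • d) j + p j ≤ 0 := by
      intro j
      have hval : W.mulVec x j + S.mulVec (u + θ • d) j + p j = v j + θ * w j := by
        rw [Matrix.mulVec_add, Matrix.mulVec_smul, hd, Matrix.mulVec_sub]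
        simp only [hv, hw, Pi.add_apply, Pi.smul_apply, Pi.sub_apply, smul_eq_mul]
        ring
      rw [hval]
      exact hθprop θ hθpos le_rfl j
    have e1 : qpCost F P H x u' = qpCost F P H x u
        + (F.mulVec u + P.mulVec x + H) ⬝ᵥ d + (1 / 2) * (d ⬝ᵥ F.mulVec d) := by
      rw [← qp_expand hFt x u d]
      congr 1
      rw [hd]; abel
    have e2 : qpCost F P H x (u + θ • d) = qpCost F P H x u
        + θ * ((F.mulVec u + P.mulVec x + H) ⬝ᵥ d)
        + θ ^ 2 * ((1 / 2) * (d ⬝ᵥ F.mulVec d)) := by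
      rw [qp_expand hFt x u (θ • d), dotProduct_smul, smul_dotProduct,
        Matrix.mulVec_smul, dotProduct_smul]
      simp only [smul_eq_mul]
      ring
    have hβ := hquad_nonneg d
    have hcost : qpCost F P H x (u + θ • d) < qpCost F P H x u := by
      nlinarith [mul_pos hθpos (sub_pos.mpr hlt),
        mul_nonneg (mul_nonneg hθpos.le (sub_nonneg.mpr hθ1)) hβ]
    exact absurd (isMinOn_iff.mp humin _ hfeasθ) (not_le.mpr hcost)
  -- ρ^A x = u
  have hρu : rhoA K s A x = u := by
    apply qp_min_unique hF (Cset := {w | ∀ j ∈ A, W.mulVec x j + S.mulVec w j + p j = 0})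
      (fun j hj => hact A x j hj) (fun j hj => (hmemA j).mp hj)
      (by
        intro j hj
        have h1 := hact A x j hj
        have h2 := (hmemA j).mp hj
        have h3 : S.mulVec (u + (1 / 2 : ℝ) • (rhoA K s A x - u)) j
            = S.mulVec u j + (1 / 2) * (S.mulVec (rhoA K s A x) j - S.mulVec u j) := by
          rw [Matrix.mulVec_add, Matrix.mulVec_smul, Matrix.mulVec_sub]
          simp
        rw [h3]; linarith)
      (hmin A x) hEqmin
  -- Step C : existence of nonnegative multipliers
  set g := -(F.mulVec u + P.mulVec x + H) with hg
  have hgC : g ∈ coneSet S A := by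
    obtain ⟨k, L, hLrep⟩ := coneSet_halfspaces S A
    rw [hLrep]
    intro i
    by_contra hpos
    push_neg at hpos
    set dvec : Fin nu → ℝ := fun r => L i r with hdvec
    have hgd : 0 < g ⬝ᵥ dvec := by
      have h1 : g ⬝ᵥ dvec = L.mulVec g i := by
        simp [Matrix.mulVec, dotProduct, hdvec, mul_comm]
      rw [h1]; exact hpos
    have hrow : ∀ j ∈ A, S.mulVec dvec j ≤ 0 := by
      intro j hj
      have hrowmem : (fun r => S j r) ∈ coneSet S A := by
        refine ⟨Pi.single j 1, ?_, ?_, ?_⟩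
        · intro j'
          rw [Pi.single_apply]
          split <;> norm_num
        · intro j' hj'
          rw [Pi.single_apply, if_neg]
          rintro rfl
          exact hj' hj
        · funext i'
          rw [Matrix.mulVec_single]
          simp [Matrix.transpose_apply]
      rw [hLrep] at hrowmem
      have h1 := hrowmem i
      have h2 : S.mulVec dvec j = L.mulVec (fun r => S j r) i := by
        simp [Matrix.mulVec, dotProduct, hdvec, mul_comm]
      rw [h2]; exact h1
    obtain ⟨ε₀, hε₀pos, _, hε₀prop⟩ := exists_step
      (fun j => W.mulVec x j + S.mulVec u j + p j) (S.mulVec dvec) hufeas (by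
        intro j hj
        exact hrow j ((hmemA j).mpr hj))
    set β := dvec ⬝ᵥ F.mulVec dvec with hβdef
    have hβ := hquad_nonneg dvec
    set γ := g ⬝ᵥ dvec with hγ
    set ε := min ε₀ (γ / (1 + β)) with hε
    have hεpos : 0 < ε := lt_min hε₀pos (div_pos hgd (by linarith))
    have hfeasε : ∀ j, W.mulVec x j + S.mulVec (u + ε • dvec) j + p j ≤ 0 := by
      intro j
      have hval : W.mulVec x j + S.mulVec (u + ε • dvec) j + p j
          = (W.mulVec x j + S.mulVec u j + p j) + ε * S.mulVec dvec j := by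
        rw [Matrix.mulVec_add, Matrix.mulVec_smul]
        simp only [Pi.add_apply, Pi.smul_apply, smul_eq_mul]
        ring
      rw [hval]
      exact hε₀prop ε hεpos (min_le_left _ _) j
    have hlin : (F.mulVec u + P.mulVec x + H) ⬝ᵥ dvec = -γ := by
      rw [hγ, hg, neg_dotProduct, neg_neg]
    have e2 : qpCost F P H x (u + ε • dvec) = qpCost F P H x u
        + ε * (-γ) + ε ^ 2 * ((1 / 2) * β) := by
      rw [qp_expand hFt x u (ε • dvec), dotProduct_smul, smul_dotProduct,
        Matrix.mulVec_smul, dotProduct_smul, hlin]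
      simp only [smul_eq_mul]
      ring
    have h1 : ε * (1 + β) ≤ γ := by
      have := min_le_right ε₀ (γ / (1 + β))
      rw [hε] at *
      exact (le_div_iff₀ (by linarith)).mp this
    have hcost : qpCost F P H x (u + ε • dvec) < qpCost F P H x u := by
      rw [e2]
      nlinarith [mul_pos hεpos hgd, hεpos, hβ]
    exact absurd (isMinOn_iff.mp humin _ hfeasε) (not_le.mpr hcost)
  obtain ⟨lam, hl1, hl2, hl3⟩ := hgC
  refine ⟨A, ?_, lam, hl1, hl2, ?_⟩
  · intro j
    rw [hρu]
    exact hufeas j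
  · rw [hρu, ← hl3, hg]
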